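/- Let L > 0 and let f : [β,γ] × Xⁿ → X be continuous and satisfy the global Lipschitz condition ‖f(t,u₁,…,uₙ) − f(t,v₁,…,vₙ)‖ ≤ L·Σ_{i=1}^{n} ‖u_i − v_i‖ for all t ∈ [β,γ] and all u₁,…,uₙ,v₁,…,vₙ ∈ X (so that in particular f satisfies the linear growth bound ‖f(t,u₁,…,uₙ)‖ ≤ L·Σ_{i=1}^{n} ‖u_i‖ + ‖f(t,0,…,0)‖). Then there exists exactly one function x : [α,γ] → X such that x is continuous on [α,γ], x(t) = φ(t) for all t ∈ [α,β], and x is differentiable on [β,γ] with x′(t) = f(t, x(τ₁(t)), x(τ₂(t)), …, x(τₙ(t))) for all t ∈ [β,γ]. -/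

import Mathlib

open Set

open intervalIntegral Topology

set_option linter.unusedSectionVars false
noncomputable section DelayAux

variable {X : Type*} [NormedAddCommGroup X] [NormedSpace ℝ X] [CompleteSpace X]

/-- clamp to `[β,γ]` -/
def dClamp (β γ t : ℝ) : ℝ := max β (min t γ)

lemma dClamp_cont (β γ : ℝ) : Continuous (dClamp β γ) :=
  continuous_const.max ((continuous_id.min continuous_const))

lemma dClamp_mem (β γ : ℝ) (h : β ≤ γ) (t : ℝ) : dClamp β γ t ∈ Icc β γ :=
  ⟨le_max_left _ _, max_le h (min_le_right _ _)⟩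

lemma dClamp_of_mem {β γ t : ℝ} (ht : t ∈ Icc β γ) : dClamp β γ t = t := by
  rw [dClamp, min_eq_left ht.2, max_eq_right ht.1]

lemma dClamp_of_le {β γ t : ℝ} (h : β ≤ γ) (ht : t ≤ β) : dClamp β γ t = β := by
  rw [dClamp, min_eq_left (ht.trans h), max_eq_left ht]

/-- extension of a continuous map on `Icc α γ` to `ℝ` -/
def dExt (α γ : ℝ) (h1 : α ≤ γ) (x : C(Icc α γ, X)) : ℝ → X :=
  fun t => x (projIcc α γ h1 t)

lemma dExt_cont (α γ : ℝ) (h1 : α ≤ γ) (x : C(Icc α γ, X)) :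
    Continuous (dExt α γ h1 x) := x.continuous.comp continuous_projIcc

/-- the integrand of the Picard operator, globally defined -/
def dG {n : ℕ} (α β γ : ℝ) (h1 : α ≤ γ) (τ : Fin n → ℝ → ℝ) (f : ℝ → (Fin n → X) → X)
    (x : C(Icc α γ, X)) : ℝ → X :=
  fun s => f (dClamp β γ s) (fun i => dExt α γ h1 x (τ i (dClamp β γ s)))

lemma dG_cont {n : ℕ} (α β γ : ℝ) (h1 : α ≤ γ) (hβγ : β ≤ γ)
    (τ : Fin n → ℝ → ℝ) (hτc : ∀ i, ContinuousOn (τ i) (Icc β γ))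
    (f : ℝ → (Fin n → X) → X)
    (hfc : ContinuousOn (fun p : ℝ × (Fin n → X) => f p.1 p.2)
      (Icc β γ ×ˢ (univ : Set (Fin n → X))))
    (x : C(Icc α γ, X)) : Continuous (dG α β γ h1 τ f x) := by
  have hc : Continuous (fun s : ℝ =>
      ((dClamp β γ s, fun i => dExt α γ h1 x (τ i (dClamp β γ s))) : ℝ × (Fin n → X))) := by
    refine (dClamp_cont β γ).prodMk (continuous_pi fun i => ?_)
    exact (dExt_cont α γ h1 x).comp
      ((hτc i).comp_continuous (dClamp_cont β γ) (dClamp_mem β γ hβγ))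
  exact hfc.comp_continuous hc (fun s => ⟨dClamp_mem β γ hβγ s, mem_univ _⟩)

/-- the Picard operator, as a raw function on ℝ -/
def dF {n : ℕ} (α β γ : ℝ) (h1 : α ≤ γ) (hαβ : α ≤ β) (τ : Fin n → ℝ → ℝ)
    (φ : ℝ → X) (f : ℝ → (Fin n → X) → X) (x : C(Icc α γ, X)) : ℝ → X :=
  fun t => φ (projIcc α β hαβ (min t β)) +
    ∫ s in β..(dClamp β γ t), dG α β γ h1 τ f x s


variable {n : ℕ} {α β γ : ℝ}

lemma dG_of_mem (h1 : α ≤ γ) (τ : Fin n → ℝ → ℝ) (f : ℝ → (Fin n → X) → X)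
    (x : C(Icc α γ, X)) {s : ℝ} (hs : s ∈ Icc β γ) :
    dG α β γ h1 τ f x s = f s (fun i => dExt α γ h1 x (τ i s)) := by
  rw [dG, dClamp_of_mem hs]

lemma dF_cont (h1 : α ≤ γ) (hαβ : α ≤ β) (hβγ : β ≤ γ)
    (τ : Fin n → ℝ → ℝ) (hτc : ∀ i, ContinuousOn (τ i) (Icc β γ))
    (φ : ℝ → X) (hφ : ContinuousOn φ (Icc α β))
    (f : ℝ → (Fin n → X) → X)
    (hfc : ContinuousOn (fun p : ℝ × (Fin n → X) => f p.1 p.2)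
      (Icc β γ ×ˢ (univ : Set (Fin n → X))))
    (x : C(Icc α γ, X)) : Continuous (dF α β γ h1 hαβ τ φ f x) := by
  have hG := dG_cont α β γ h1 hβγ τ hτc f hfc x
  refine Continuous.add ?_ ?_
  · exact hφ.comp_continuous
      ((continuous_projIcc.comp (continuous_id.min continuous_const)).subtype_val)
      (fun t => (projIcc α β hαβ _).2)
  · exact (intervalIntegral.continuous_primitive
      (fun a b => hG.intervalIntegrable a b) β).comp (dClamp_cont β γ)

lemma dF_of_le (h1 : α ≤ γ) (hαβ : α ≤ β) (hβγ : β ≤ γ) (τ : Fin n → ℝ → ℝ)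
    (φ : ℝ → X) (f : ℝ → (Fin n → X) → X) (x : C(Icc α γ, X))
    {t : ℝ} (ht : t ≤ β) :
    dF α β γ h1 hαβ τ φ f x t = φ (projIcc α β hαβ t) := by
  rw [dF, min_eq_left ht, dClamp_of_le hβγ ht, intervalIntegral.integral_same, add_zero]

lemma dF_of_mem (h1 : α ≤ γ) (hαβ : α ≤ β) (τ : Fin n → ℝ → ℝ)
    (φ : ℝ → X) (f : ℝ → (Fin n → X) → X) (x : C(Icc α γ, X))
    {t : ℝ} (ht : t ∈ Icc β γ) :
    dF α β γ h1 hαβ τ φ f x t = φ β + ∫ s in β..t, dG α β γ h1 τ f x s := by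
  rw [dF, min_eq_right ht.1, dClamp_of_mem ht, projIcc_right]

lemma dF_hasDeriv (h1 : α ≤ γ) (hαβ : α ≤ β) (hβγ : β ≤ γ)
    (τ : Fin n → ℝ → ℝ) (hτc : ∀ i, ContinuousOn (τ i) (Icc β γ))
    (φ : ℝ → X) (f : ℝ → (Fin n → X) → X)
    (hfc : ContinuousOn (fun p : ℝ × (Fin n → X) => f p.1 p.2)
      (Icc β γ ×ˢ (univ : Set (Fin n → X))))
    (x : C(Icc α γ, X)) {t : ℝ} (ht : t ∈ Icc β γ) :
    HasDerivWithinAt (dF α β γ h1 hαβ τ φ f x)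
      (dG α β γ h1 τ f x t) (Icc β γ) t := by
  have hG := dG_cont α β γ h1 hβγ τ hτc f hfc x
  have h2 : HasDerivWithinAt (fun u => φ β + ∫ s in β..u, dG α β γ h1 τ f x s)
      (dG α β γ h1 τ f x t) (Icc β γ) t := by
    haveI : Fact (t ∈ Icc β γ) := ⟨ht⟩
    refine HasDerivWithinAt.const_add _ ?_
    exact intervalIntegral.integral_hasDerivWithinAt_right
      (hG.intervalIntegrable β t) (hG.stronglyMeasurableAtFilter _ _)
      hG.continuousWithinAt
  exact h2.congr (fun u hu => (dF_of_mem h1 hαβ τ φ f x hu))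
    (dF_of_mem h1 hαβ τ φ f x ht)


/-- The Picard operator as a self-map of `C(Icc α γ, X)`. -/
def dT (h1 : α ≤ γ) (hαβ : α ≤ β) (hβγ : β ≤ γ)
    (τ : Fin n → ℝ → ℝ) (hτc : ∀ i, ContinuousOn (τ i) (Icc β γ))
    (φ : ℝ → X) (hφ : ContinuousOn φ (Icc α β))
    (f : ℝ → (Fin n → X) → X)
    (hfc : ContinuousOn (fun p : ℝ × (Fin n → X) => f p.1 p.2)
      (Icc β γ ×ˢ (univ : Set (Fin n → X)))) :
    C(Icc α γ, X) → C(Icc α γ, X) :=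
  fun x => ⟨fun t => dF α β γ h1 hαβ τ φ f x t,
    (dF_cont h1 hαβ hβγ τ hτc φ hφ f hfc x).comp continuous_subtype_val⟩

lemma dT_apply (h1 : α ≤ γ) (hαβ : α ≤ β) (hβγ : β ≤ γ)
    (τ : Fin n → ℝ → ℝ) (hτc : ∀ i, ContinuousOn (τ i) (Icc β γ))
    (φ : ℝ → X) (hφ : ContinuousOn φ (Icc α β))
    (f : ℝ → (Fin n → X) → X)
    (hfc : ContinuousOn (fun p : ℝ × (Fin n → X) => f p.1 p.2)
      (Icc β γ ×ˢ (univ : Set (Fin n → X))))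
    (x : C(Icc α γ, X)) (t : Icc α γ) :
    dT h1 hαβ hβγ τ hτc φ hφ f hfc x t = dF α β γ h1 hαβ τ φ f x t := rfl


lemma dStep (h1 : α ≤ γ) (hαβ : α ≤ β) (hβγ : β ≤ γ)
    (τ : Fin n → ℝ → ℝ) (hτc : ∀ i, ContinuousOn (τ i) (Icc β γ))
    (hτ : ∀ i, ∀ t ∈ Icc β γ, α ≤ τ i t ∧ τ i t ≤ t)
    (φ : ℝ → X) (hφ : ContinuousOn φ (Icc α β))
    {L : ℝ} (hL : 0 < L)
    (f : ℝ → (Fin n → X) → X)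
    (hfc : ContinuousOn (fun p : ℝ × (Fin n → X) => f p.1 p.2)
      (Icc β γ ×ˢ (univ : Set (Fin n → X))))
    (hfl : ∀ t ∈ Icc β γ, ∀ u v : Fin n → X,
      ‖f t u - f t v‖ ≤ L * ∑ i, ‖u i - v i‖)
    (x y : C(Icc α γ, X)) (C : ℝ) (hC : 0 ≤ C) (m : ℕ)
    (h : ∀ t : Icc α γ, ‖x t - y t‖ ≤ C * (max ((t : ℝ) - β) 0) ^ m / m.factorial)
    (t : Icc α γ) :
    ‖dT h1 hαβ hβγ τ hτc φ hφ f hfc x t - dT h1 hαβ hβγ τ hτc φ hφ f hfc y t‖ ≤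
      (L * n * C) * (max ((t : ℝ) - β) 0) ^ (m + 1) / (m + 1).factorial := by
  rw [dT_apply, dT_apply]
  rcases le_total (t : ℝ) β with ht | ht
  · rw [dF_of_le h1 hαβ hβγ τ φ f x ht, dF_of_le h1 hαβ hβγ τ φ f y ht,
      sub_self, norm_zero, max_eq_right (sub_nonpos.2 ht), zero_pow (Nat.succ_ne_zero m),
      mul_zero, zero_div]
  · have htm : (t : ℝ) ∈ Icc β γ := ⟨ht, t.2.2⟩
    rw [dF_of_mem h1 hαβ τ φ f x htm, dF_of_mem h1 hαβ τ φ f y htm,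
      add_sub_add_left_eq_sub]
    have hGx := dG_cont α β γ h1 hβγ τ hτc f hfc x
    have hGy := dG_cont α β γ h1 hβγ τ hτc f hfc y
    rw [← intervalIntegral.integral_sub (hGx.intervalIntegrable _ _)
      (hGy.intervalIntegrable _ _)]
    have hbd : ∀ s ∈ Icc β (t : ℝ),
        ‖dG α β γ h1 τ f x s - dG α β γ h1 τ f y s‖ ≤
          (L * n * C / m.factorial) * (s - β) ^ m := by
      intro s hs
      have hsm : s ∈ Icc β γ := ⟨hs.1, hs.2.trans t.2.2⟩
      rw [dG_of_mem h1 τ f x hsm, dG_of_mem h1 τ f y hsm]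
      refine (hfl s hsm _ _).trans ?_
      have hterm : ∀ i, ‖dExt α γ h1 x (τ i s) - dExt α γ h1 y (τ i s)‖ ≤
          C * (s - β) ^ m / m.factorial := by
        intro i
        obtain ⟨hα', hs'⟩ := hτ i s hsm
        have hτmem : τ i s ∈ Icc α γ := ⟨hα', hs'.trans hsm.2⟩
        have hcoe : ((projIcc α γ h1 (τ i s) : Icc α γ) : ℝ) = τ i s := by
          rw [projIcc_of_mem h1 hτmem]
        refine (h (projIcc α γ h1 (τ i s))).trans ?_
        rw [hcoe]
        have hmax : max (τ i s - β) 0 ≤ (s - β) := by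
          refine max_le (by linarith) (by linarith [hs.1])
        have hp : (max (τ i s - β) 0) ^ m ≤ (s - β) ^ m :=
          pow_le_pow_left₀ (le_max_right _ _) hmax m
        exact (div_le_div_iff_of_pos_right (by positivity : (0:ℝ) < m.factorial)).2
          (mul_le_mul_of_nonneg_left hp hC)
      calc L * ∑ i, ‖dExt α γ h1 x (τ i s) - dExt α γ h1 y (τ i s)‖
          ≤ L * ∑ _i : Fin n, C * (s - β) ^ m / m.factorial := by
            gcongr with i _
            exact hterm i
        _ = (L * n * C / m.factorial) * (s - β) ^ m := by
            rw [Finset.sum_const, Finset.card_univ, Fintype.card_fin, nsmul_eq_mul]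
            ring
    calc ‖∫ s in β..(t : ℝ), (dG α β γ h1 τ f x s - dG α β γ h1 τ f y s)‖
        ≤ ∫ s in β..(t : ℝ), ‖dG α β γ h1 τ f x s - dG α β γ h1 τ f y s‖ :=
          intervalIntegral.norm_integral_le_integral_norm ht
      _ ≤ ∫ s in β..(t : ℝ), (L * n * C / m.factorial) * (s - β) ^ m := by
          refine intervalIntegral.integral_mono_on ht ?_ ?_ hbd
          · exact (hGx.sub hGy).norm.intervalIntegrable _ _
          · exact (Continuous.intervalIntegrable (by fun_prop) _ _)
      _ = (L * n * C / m.factorial) * ∫ s in β..(t : ℝ), (s - β) ^ m := by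
          rw [intervalIntegral.integral_const_mul]
      _ = (L * ↑n * C) * (max ((t : ℝ) - β) 0) ^ (m + 1) / (m + 1).factorial := by
          rw [intervalIntegral.integral_comp_sub_right (fun u => u ^ m) β,
            sub_self, integral_pow, max_eq_left (by linarith), Nat.factorial_succ]
          push_cast
          have h2 : (m.factorial : ℝ) ≠ 0 := by positivity
          field_simp
          ring_nf

end DelayAux


/-- Global existence and uniqueness on `[α, γ]` for nonlinear delay
differential equations with a globally Lipschitz (hence linearly growing)
nonlinearity (continuous-time case of the paper's remark). -/
theorem nonlinear_delay_global_existence_uniqueness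
    {X : Type*} [NormedAddCommGroup X] [NormedSpace ℝ X] [CompleteSpace X]
    {n : ℕ} (hn : 0 < n)
    {α β γ : ℝ} (hαβ : α ≤ β) (hβγ : β < γ)
    (τ : Fin n → ℝ → ℝ)
    (hτc : ∀ i, ContinuousOn (τ i) (Icc β γ))
    (hτ : ∀ i, ∀ t ∈ Icc β γ, α ≤ τ i t ∧ τ i t ≤ t)
    (φ : ℝ → X) (hφ : ContinuousOn φ (Icc α β))
    {L : ℝ} (hL : 0 < L)
    (f : ℝ → (Fin n → X) → X)
    (hfc : ContinuousOn (fun p : ℝ × (Fin n → X) => f p.1 p.2)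
      (Icc β γ ×ˢ (univ : Set (Fin n → X))))
    (hfl : ∀ t ∈ Icc β γ, ∀ u v : Fin n → X,
      ‖f t u - f t v‖ ≤ L * ∑ i, ‖u i - v i‖) :
    ∃ x : ℝ → X,
      (ContinuousOn x (Icc α γ) ∧
        (∀ t ∈ Icc α β, x t = φ t) ∧
        (∀ t ∈ Icc β γ,
          HasDerivWithinAt x (f t (fun i => x (τ i t))) (Icc β γ) t)) ∧
      ∀ y : ℝ → X,
        (ContinuousOn y (Icc α γ) ∧
          (∀ t ∈ Icc α β, y t = φ t) ∧
          (∀ t ∈ Icc β γ,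
            HasDerivWithinAt y (f t (fun i => y (τ i t))) (Icc β γ) t)) →
        EqOn y x (Icc α γ) := by

  have h1 : α ≤ γ := hαβ.trans hβγ.le
  have hβγ' : β ≤ γ := hβγ.le
  set T := dT h1 hαβ hβγ' τ hτc φ hφ f hfc with hTdef
  have key : ∀ (m : ℕ) (x y : C(Icc α γ, X)) (t : Icc α γ),
      ‖(T^[m] x) t - (T^[m] y) t‖ ≤
        ((L * n) ^ m * dist x y) * (max ((t : ℝ) - β) 0) ^ m / m.factorial := by
    intro m
    induction m with
    | zero =>
      intro x y t
      simp only [Function.iterate_zero, id_eq, pow_zero, one_mul, Nat.factorial_zero,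
        Nat.cast_one, div_one, pow_zero, mul_one]
      rw [← dist_eq_norm]
      exact ContinuousMap.dist_apply_le_dist t
    | succ m ih =>
      intro x y t
      rw [Function.iterate_succ_apply', Function.iterate_succ_apply']
      have hC : 0 ≤ (L * n) ^ m * dist x y := by positivity
      have hstep := dStep h1 hαβ hβγ' τ hτc hτ φ hφ hL f hfc hfl (T^[m] x) (T^[m] y)
        ((L * n) ^ m * dist x y) hC m (ih x y) t
      refine hstep.trans (le_of_eq ?_)
      ring
  have hsup : ∀ (m : ℕ) (x y : C(Icc α γ, X)),
      dist (T^[m] x) (T^[m] y) ≤ ((L * n * (γ - β)) ^ m / m.factorial) * dist x y := by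
    intro m x y
    have hγβ : (0:ℝ) ≤ γ - β := by linarith
    have h0 : (0:ℝ) ≤ (L * n * (γ - β)) ^ m / m.factorial * dist x y := by positivity
    rw [ContinuousMap.dist_le h0]
    intro t
    rw [dist_eq_norm]
    refine (key m x y t).trans ?_
    have hmax : max ((t:ℝ) - β) 0 ≤ γ - β := max_le (by linarith [t.2.2]) hγβ
    have hp : (max ((t:ℝ) - β) 0) ^ m ≤ (γ - β) ^ m :=
      pow_le_pow_left₀ (le_max_right _ _) hmax m
    calc ((L*n)^m * dist x y) * (max ((t:ℝ)-β) 0)^m / m.factorial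
        ≤ ((L*n)^m * dist x y) * (γ-β)^m / m.factorial := by gcongr
      _ = (L*n*(γ-β))^m / m.factorial * dist x y := by rw [mul_pow, mul_pow]; ring
  obtain ⟨m, hm⟩ : ∃ m : ℕ, (L * n * (γ - β)) ^ m / m.factorial < 1 :=
    ((Real.summable_pow_div_factorial
      (L * n * (γ - β))).tendsto_atTop_zero.eventually_lt_const one_pos).exists
  have hγβ : (0:ℝ) ≤ γ - β := by linarith
  have hc0 : (0:ℝ) ≤ (L * n * (γ - β)) ^ m / m.factorial := by positivity
  have hcontr : ContractingWith ⟨_, hc0⟩ (T^[m]) := by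
    constructor
    · exact_mod_cast hm
    · exact LipschitzWith.of_dist_le_mul (fun x y => hsup m x y)
  haveI : Nonempty C(Icc α γ, X) := ⟨ContinuousMap.const _ (φ β)⟩
  set z : C(Icc α γ, X) := hcontr.fixedPoint (T^[m]) with hz
  have hTz : T z = z := hcontr.isFixedPt_fixedPoint_iterate
  have huniq : ∀ w : C(Icc α γ, X), T w = w → w = z := fun w hw =>
    hcontr.fixedPoint_unique (Function.IsFixedPt.iterate hw m)
  have hzF : ∀ t ∈ Icc α γ, dExt α γ h1 z t = dF α β γ h1 hαβ τ φ f z t := by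
    intro t ht
    show z (projIcc α γ h1 t) = _
    conv_lhs => rw [← hTz]
    rw [dT_apply]
    congr 1
    rw [projIcc_of_mem h1 ht]
  refine ⟨dExt α γ h1 z, ⟨(dExt_cont α γ h1 z).continuousOn, ?_, ?_⟩, ?_⟩
  · intro t ht
    have htγ : t ∈ Icc α γ := ⟨ht.1, ht.2.trans hβγ'⟩
    rw [hzF t htγ, dF_of_le h1 hαβ hβγ' τ φ f z ht.2, projIcc_of_mem hαβ ht]
  · intro t ht
    have hEq : ∀ u ∈ Icc β γ, dExt α γ h1 z u = dF α β γ h1 hαβ τ φ f z u :=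
      fun u hu => hzF u ⟨hαβ.trans hu.1, hu.2⟩
    have hd := (dF_hasDeriv h1 hαβ hβγ' τ hτc φ f hfc z ht).congr hEq (hEq t ht)
    rw [dG_of_mem h1 τ f z ht] at hd
    exact hd
  · rintro y ⟨hyc, hyφ, hyd⟩
    have hY : Continuous ((Icc α γ).restrict y) := hyc.restrict
    set Y : C(Icc α γ, X) := ⟨(Icc α γ).restrict y, hY⟩ with hYdef
    have hGY : ∀ s ∈ Icc β γ, dG α β γ h1 τ f Y s = f s (fun i => y (τ i s)) := by
      intro s hs
      rw [dG_of_mem h1 τ f Y hs]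
      congr 1
      funext i
      obtain ⟨ha, hb⟩ := hτ i s hs
      have hmem : τ i s ∈ Icc α γ := ⟨ha, hb.trans hs.2⟩
      show Y (projIcc α γ h1 (τ i s)) = _
      rw [projIcc_of_mem h1 hmem]
      rfl
    have hTY : T Y = Y := by
      ext pt
      rw [dT_apply]
      show dF α β γ h1 hαβ τ φ f Y ↑pt = y ↑pt
      rcases le_total ((pt : ℝ)) β with hp | hp
      · rw [dF_of_le h1 hαβ hβγ' τ φ f Y hp, projIcc_of_mem hαβ ⟨pt.2.1, hp⟩]
        exact (hyφ _ ⟨pt.2.1, hp⟩).symm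
      · have hptm : (pt:ℝ) ∈ Icc β γ := ⟨hp, pt.2.2⟩
        rw [dF_of_mem h1 hαβ τ φ f Y hptm]
        have hint : IntervalIntegrable (dG α β γ h1 τ f Y) MeasureTheory.volume β (pt:ℝ) :=
          (dG_cont α β γ h1 hβγ' τ hτc f hfc Y).intervalIntegrable β (pt:ℝ)
        have hderiv : ∀ s ∈ Ioo β ((pt:ℝ)),
            HasDerivWithinAt y (dG α β γ h1 τ f Y s) (Ioi s) s := by
          intro s hs
          have hsm : s ∈ Icc β γ := ⟨hs.1.le, hs.2.le.trans pt.2.2⟩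
          rw [hGY s hsm]
          refine (hyd s hsm).mono_of_mem_nhdsWithin ?_
          have hIoo : Ioo s γ ∈ 𝓝[>] s :=
            Ioo_mem_nhdsGT_of_mem ⟨le_refl s, lt_of_lt_of_le hs.2 pt.2.2⟩
          exact Filter.mem_of_superset hIoo
            (fun u hu => ⟨(hs.1.trans hu.1).le, hu.2.le⟩)
        have hFTC := intervalIntegral.integral_eq_sub_of_hasDeriv_right_of_le hp
          (hyc.mono (Icc_subset_Icc hαβ pt.2.2)) hderiv hint
        rw [hFTC, ← hyφ β ⟨hαβ, le_refl β⟩]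
        abel
    have hYz : Y = z := huniq Y hTY
    intro t htm
    show y t = dExt α γ h1 z t
    have h2 : y t = Y ⟨t, htm⟩ := rfl
    rw [h2, hYz]
    show z ⟨t, htm⟩ = z (projIcc α γ h1 t)
    rw [projIcc_of_mem h1 htm]
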